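/- Let G be an edge-ordered bigraph that avoids P_6^{-13254}. Then the spanning subgraph G_r of G formed by its right inclined edges avoids P_5^{+2143}. -/

import Mathlib

set_option maxHeartbeats 1000000

/-- An edge-ordered graph: a finite simple graph together with an injective
real labeling of its edges (inducing a linear order on the edge set). -/
structure EOGraph (V : Type) [Fintype V] where
  graph : SimpleGraph V
  label : Sym2 V → ℝ
  inj : ∀ e ∈ graph.edgeSet, ∀ f ∈ graph.edgeSet, label e = label f → e = f

/-- `G` contains `H`: an injective, adjacency-preserving, edge-order-respecting map. -/
def EOContains {V W : Type} [Fintype V] [Fintype W] (G : EOGraph V) (H : EOGraph W) : Prop :=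
  ∃ f : W → V, Function.Injective f ∧
    (∀ a b, H.graph.Adj a b → G.graph.Adj (f a) (f b)) ∧
    ∀ e ∈ H.graph.edgeSet, ∀ e' ∈ H.graph.edgeSet,
      H.label e < H.label e' → G.label (Sym2.map f e) < G.label (Sym2.map f e')

/-- The Turán number `ex_<(n, H)`: the maximum number of edges of an
edge-ordered graph on `n` vertices avoiding `H`. -/
noncomputable def exLT {W : Type} [Fintype W] (n : ℕ) (H : EOGraph W) : ℕ :=
  sSup {m | ∃ G : EOGraph (Fin n), ¬ EOContains G H ∧ G.graph.edgeSet.ncard = m}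

/-- The reverse of an edge-ordered graph: same graph, reversed edge order. -/
def EOGraph.reverse {V : Type} [Fintype V] (G : EOGraph V) : EOGraph V where
  graph := G.graph
  label := fun e => - G.label e
  inj := fun e he f hf h => G.inj e he f hf (neg_inj.mp h)

/-- Two edges (as elements of `Sym2 V`) are adjacent if they share a vertex. -/
def EdgesAdjacent {V : Type} (e f : Sym2 V) : Prop := ∃ v, v ∈ e ∧ v ∈ f

/-- `e` and `f` are consecutive edges of `G`: `e < f` with no edge strictly in between. -/
def Consecutive {V : Type} [Fintype V] (G : EOGraph V) (e f : Sym2 V) : Prop :=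
  e ∈ G.graph.edgeSet ∧ f ∈ G.graph.edgeSet ∧ G.label e < G.label f ∧
    ¬ ∃ g ∈ G.graph.edgeSet, G.label e < G.label g ∧ G.label g < G.label f

/-- A semi-caterpillar: the underlying graph is a tree with at least one edge, and any
pair of consecutive edges is adjacent or directly connected by an edge larger than both. -/
def IsSemiCaterpillar {V : Type} [Fintype V] (G : EOGraph V) : Prop :=
  G.graph.IsTree ∧ G.graph.edgeSet.Nonempty ∧
  ∀ e f, Consecutive G e f →
    EdgesAdjacent e f ∨
    ∃ u v, s(u, v) ∈ G.graph.edgeSet ∧ u ∈ e ∧ v ∈ f ∧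
      G.label e < G.label s(u, v) ∧ G.label f < G.label s(u, v)

/-- The order chromatic number of `G` is at most `k`: there is a simple graph `H` with
chromatic number at most `k` all of whose edge-orderings contain `G`. -/
def OrderChromAtMost {V : Type} [Fintype V] (G : EOGraph V) (k : ℕ) : Prop :=
  ∃ (m : ℕ) (H : SimpleGraph (Fin m)), H.chromaticNumber ≤ (k : ℕ∞) ∧
    ∀ K : EOGraph (Fin m), K.graph = H → EOContains K G

/-- The order chromatic number of `G` equals 2. -/
def HasOrderChrom2 {V : Type} [Fintype V] (G : EOGraph V) : Prop :=
  OrderChromAtMost G 2 ∧ ¬ OrderChromAtMost G 1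

/-- A vertex is close if the edges incident to it form an interval in the edge order. -/
def CloseVertex {V : Type} [Fintype V] (G : EOGraph V) (v : V) : Prop :=
  ∀ e ∈ G.graph.edgeSet, ∀ f ∈ G.graph.edgeSet, ∀ g ∈ G.graph.edgeSet,
    v ∈ e → v ∈ g → G.label e ≤ G.label f → G.label f ≤ G.label g → v ∈ f

/-- An edge-ordered bigraph: an edge-ordered graph with a proper 2-coloring of the
vertices into left (`false`) and right (`true`) vertices. -/
structure EOBigraph (V : Type) [Fintype V] where
  toEOGraph : EOGraph V
  side : V → Bool
  proper : ∀ u v, toEOGraph.graph.Adj u v → side u ≠ side v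

/-- A right caterpillar: an edge-ordered bigraph whose underlying edge-ordered graph is a
semi-caterpillar and all of whose right vertices are close. -/
def IsRightCaterpillar {V : Type} [Fintype V] (B : EOBigraph V) : Prop :=
  IsSemiCaterpillar B.toEOGraph ∧ ∀ v, B.side v = true → CloseVertex B.toEOGraph v

/-- Containment of edge-ordered bigraphs: additionally sides must be preserved. -/
def BContains {V W : Type} [Fintype V] [Fintype W] (G : EOBigraph V) (H : EOBigraph W) : Prop :=
  ∃ f : W → V, Function.Injective f ∧
    (∀ a b, H.toEOGraph.graph.Adj a b → G.toEOGraph.graph.Adj (f a) (f b)) ∧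
    (∀ e ∈ H.toEOGraph.graph.edgeSet, ∀ e' ∈ H.toEOGraph.graph.edgeSet,
      H.toEOGraph.label e < H.toEOGraph.label e' →
        G.toEOGraph.label (Sym2.map f e) < G.toEOGraph.label (Sym2.map f e')) ∧
    ∀ a, G.side (f a) = H.side a

/-- Isomorphism of edge-ordered bigraphs. -/
def BIsoTo {V W : Type} [Fintype W] [Fintype V] (H : EOBigraph W) (G : EOBigraph V) : Prop :=
  ∃ f : W ≃ V, (∀ a b, H.toEOGraph.graph.Adj a b ↔ G.toEOGraph.graph.Adj (f a) (f b)) ∧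
    (∀ e ∈ H.toEOGraph.graph.edgeSet, ∀ e' ∈ H.toEOGraph.graph.edgeSet,
      (H.toEOGraph.label e < H.toEOGraph.label e' ↔
        G.toEOGraph.label (Sym2.map f e) < G.toEOGraph.label (Sym2.map f e'))) ∧
    ∀ a, G.side (f a) = H.side a

/-- Isomorphism of edge-ordered graphs. -/
def EOIsoTo {V W : Type} [Fintype W] [Fintype V] (H : EOGraph W) (G : EOGraph V) : Prop :=
  ∃ f : W ≃ V, (∀ a b, H.graph.Adj a b ↔ G.graph.Adj (f a) (f b)) ∧
    ∀ e ∈ H.graph.edgeSet, ∀ e' ∈ H.graph.edgeSet,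
      (H.label e < H.label e' ↔ G.label (Sym2.map f e) < G.label (Sym2.map f e'))

/-- The labeling of the path graph on `Fin k` in which the edge `{i, i+1}` gets label `w i`. -/
def pathLabel {k : ℕ} (w : Fin k → ℝ) : Sym2 (Fin k) → ℝ :=
  Sym2.lift ⟨fun i j => w (min i j), fun i j => by simp [min_comm]⟩

lemma pathGraph_edge_form {k : ℕ} {e : Sym2 (Fin k)}
    (he : e ∈ (SimpleGraph.pathGraph k).edgeSet) :
    ∃ i j : Fin k, e = s(i, j) ∧ (i : ℕ) + 1 = (j : ℕ) := by
  induction e using Sym2.inductionOn with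
  | hf a b =>
    rw [SimpleGraph.mem_edgeSet, SimpleGraph.pathGraph_adj] at he
    rcases he with h | h
    · exact ⟨a, b, rfl, h⟩
    · exact ⟨b, a, Sym2.eq_swap, h⟩

/-- The edge-ordered path on `k` vertices whose edge labels, listed along the path,
are `w 0, w 1, …, w (k-2)`. -/
def pathEO (k : ℕ) (w : Fin k → ℝ) (hw : Function.Injective w) : EOGraph (Fin k) where
  graph := SimpleGraph.pathGraph k
  label := pathLabel w
  inj := by
    intro e he f hf hef
    obtain ⟨i, j, rfl, hij⟩ := pathGraph_edge_form he
    obtain ⟨i', j', rfl, hij'⟩ := pathGraph_edge_form hf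
    have h1 : min i j = i := min_eq_left (Fin.le_def.mpr (by omega))
    have h2 : min i' j' = i' := min_eq_left (Fin.le_def.mpr (by omega))
    simp only [pathLabel, Sym2.lift_mk] at hef
    rw [h1, h2] at hef
    have hii : i = i' := hw hef
    have hjj : j = j' := Fin.ext (by omega)
    rw [hii, hjj]

/-- The edge-ordered path with natural-number labels. -/
def pathEON (k : ℕ) (v : Fin k → ℕ) (hv : Function.Injective v) : EOGraph (Fin k) :=
  pathEO k (fun i => (v i : ℝ)) (fun a b h => hv (Nat.cast_injective h))

/-- The bipartition of the edge-ordered path `pathEON k v hv`; the starting vertex is a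
right vertex iff `startRight` holds (right = `true`, left = `false`). -/
def pathEOBig (k : ℕ) (v : Fin k → ℕ) (hv : Function.Injective v) (startRight : Bool) :
    EOBigraph (Fin k) where
  toEOGraph := pathEON k v hv
  side := fun i => if i.val % 2 = 0 then startRight else !startRight
  proper := by
    intro a b hab
    have h : (SimpleGraph.pathGraph k).Adj a b := hab
    rw [SimpleGraph.pathGraph_adj] at h
    have hpar : (a.val % 2 = 0) ↔ ¬ (b.val % 2 = 0) := by omega
    by_cases ha : a.val % 2 = 0 <;> by_cases hb : b.val % 2 = 0 <;>
      simp_all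

def P4_213 : EOGraph (Fin 4) := pathEON 4 ![2,1,3,0] (by decide)
def P5_1342 : EOGraph (Fin 5) := pathEON 5 ![1,3,4,2,0] (by decide)
def P5_1432 : EOGraph (Fin 5) := pathEON 5 ![1,4,3,2,0] (by decide)
def P6_13254 : EOGraph (Fin 6) := pathEON 6 ![1,3,2,5,4,0] (by decide)
def P6_21354 : EOGraph (Fin 6) := pathEON 6 ![2,1,3,5,4,0] (by decide)
def P6plus_13254 : EOBigraph (Fin 6) := pathEOBig 6 ![1,3,2,5,4,0] (by decide) true
def P6minus_13254 : EOBigraph (Fin 6) := pathEOBig 6 ![1,3,2,5,4,0] (by decide) false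
def P5plus_2143 : EOBigraph (Fin 5) := pathEOBig 5 ![2,1,4,3,0] (by decide) true
def P5minus_2143 : EOBigraph (Fin 5) := pathEOBig 5 ![2,1,4,3,0] (by decide) false

/-- `B'` is an extension of `B`: it is obtained by adding new edges, each connecting an end
of the smallest edge `s(x,y)` of `B` to a new degree-1 vertex, all new edges being smaller
than `s(x,y)`, and all new edges at the left end being smaller than those at the right end. -/
def IsExtensionOf {V' V : Type} [Fintype V'] [Fintype V]
    (B' : EOBigraph V') (B : EOBigraph V) : Prop :=
  ∃ (ι : V → V') (x y : V),
    Function.Injective ι ∧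
    B.toEOGraph.graph.Adj x y ∧ B.side x = false ∧ B.side y = true ∧
    (∀ e ∈ B.toEOGraph.graph.edgeSet, B.toEOGraph.label s(x, y) ≤ B.toEOGraph.label e) ∧
    (∀ a b, B.toEOGraph.graph.Adj a b ↔ B'.toEOGraph.graph.Adj (ι a) (ι b)) ∧
    (∀ a, B'.side (ι a) = B.side a) ∧
    (∀ e ∈ B.toEOGraph.graph.edgeSet, ∀ f ∈ B.toEOGraph.graph.edgeSet,
      (B.toEOGraph.label e < B.toEOGraph.label f ↔
        B'.toEOGraph.label (Sym2.map ι e) < B'.toEOGraph.label (Sym2.map ι f))) ∧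
    (∀ w : V', w ∉ Set.range ι →
      (∃! u, B'.toEOGraph.graph.Adj w u) ∧
      (∀ u, B'.toEOGraph.graph.Adj w u → (u = ι x ∨ u = ι y) ∧
        B'.toEOGraph.label s(w, u) < B'.toEOGraph.label s(ι x, ι y))) ∧
    (∀ w w' : V', w ∉ Set.range ι → w' ∉ Set.range ι →
      B'.toEOGraph.graph.Adj w (ι x) → B'.toEOGraph.graph.Adj w' (ι y) →
      B'.toEOGraph.label s(w, ι x) < B'.toEOGraph.label s(w', ι y))

/-- A bundled edge-ordered bigraph (on some `Fin n`). -/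
structure BundledBigraph where
  n : ℕ
  big : EOBigraph (Fin n)

/-- `B` is (isomorphic to) `T₀`, the edge-ordered bigraph with one edge and two vertices. -/
def IsT0 {V : Type} [Fintype V] (B : EOBigraph V) : Prop :=
  Fintype.card V = 2 ∧ ∀ u v : V, u ≠ v → B.toEOGraph.graph.Adj u v

/-- `B` can be obtained (up to isomorphism) from `T₀` by a sequence of `i` extensions. -/
def ReachedInSteps {V : Type} [Fintype V] (i : ℕ) (B : EOBigraph V) : Prop :=
  ∃ f : ℕ → BundledBigraph, IsT0 (f 0).big ∧ BIsoTo (f i).big B ∧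
    ∀ j < i, IsExtensionOf (f (j+1)).big (f j).big

/-- The recursive depth of a right caterpillar: the minimum number of extension steps
needed to obtain it from `T₀`. -/
def HasRecursiveDepth {V : Type} [Fintype V] (B : EOBigraph V) (i : ℕ) : Prop :=
  ReachedInSteps i B ∧ ∀ j < i, ¬ ReachedInSteps j B

/-- An edge `e` (with left end `x` and right end `y`) is `c`-left-leaning: there are `c` edges
at `x` and `c` edges at `y` with every edge of the latter set larger than every edge of the
former, but smaller than `e`. -/
def LeftLeaning {V : Type} [Fintype V] (c : ℕ) (G : EOBigraph V) (e : Sym2 V) : Prop :=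
  ∃ x y : V, e = s(x, y) ∧ e ∈ G.toEOGraph.graph.edgeSet ∧
    G.side x = false ∧ G.side y = true ∧
    ∃ S S' : Finset (Sym2 V), S.card = c ∧ S'.card = c ∧
      (∀ f ∈ S, f ∈ G.toEOGraph.graph.edgeSet ∧ x ∈ f) ∧
      (∀ f ∈ S', f ∈ G.toEOGraph.graph.edgeSet ∧ y ∈ f) ∧
      (∀ f ∈ S, ∀ f' ∈ S', G.toEOGraph.label f < G.toEOGraph.label f') ∧
      (∀ f' ∈ S', G.toEOGraph.label f' < G.toEOGraph.label e)

/-- An edge `e` (with left end `x` and right end `y`) is `c`-right-leaning. -/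
def RightLeaning {V : Type} [Fintype V] (c : ℕ) (G : EOBigraph V) (e : Sym2 V) : Prop :=
  ∃ x y : V, e = s(x, y) ∧ e ∈ G.toEOGraph.graph.edgeSet ∧
    G.side x = false ∧ G.side y = true ∧
    ∃ S S' : Finset (Sym2 V), S.card = c ∧ S'.card = c ∧
      (∀ f ∈ S, f ∈ G.toEOGraph.graph.edgeSet ∧ x ∈ f) ∧
      (∀ f ∈ S', f ∈ G.toEOGraph.graph.edgeSet ∧ y ∈ f) ∧
      (∀ f' ∈ S', ∀ f ∈ S, G.toEOGraph.label f' < G.toEOGraph.label f) ∧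
      (∀ f ∈ S, G.toEOGraph.label f < G.toEOGraph.label e)

/-- The spanning sub-bigraph of `G` consisting of the edges satisfying `P`. -/
def bigraphRestrict {V : Type} [Fintype V] (G : EOBigraph V) (P : Sym2 V → Prop) :
    EOBigraph V where
  toEOGraph :=
    { graph := SimpleGraph.fromEdgeSet {e | e ∈ G.toEOGraph.graph.edgeSet ∧ P e}
      label := G.toEOGraph.label
      inj := by
        intro e he f hf h
        rw [SimpleGraph.edgeSet_fromEdgeSet] at he hf
        exact G.toEOGraph.inj e he.1.1 f hf.1.1 h }
  side := G.side
  proper := by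
    intro u v huv
    rw [SimpleGraph.fromEdgeSet_adj] at huv
    have h1 : s(u, v) ∈ G.toEOGraph.graph.edgeSet := huv.1.1
    exact G.proper u v ((SimpleGraph.mem_edgeSet _).mp h1)

/-- The spanning subgraph of the `c`-left-leaning edges. -/
def leftSub {V : Type} [Fintype V] (c : ℕ) (G : EOBigraph V) : EOBigraph V :=
  bigraphRestrict G (LeftLeaning c G)

/-- The spanning subgraph of the `c`-right-leaning edges. -/
def rightSub {V : Type} [Fintype V] (c : ℕ) (G : EOBigraph V) : EOBigraph V :=
  bigraphRestrict G (RightLeaning c G)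

/-- `G^{c-left}_i`: iteratively keep only `c`-left-leaning edges, `i` times. -/
def leftIter {V : Type} [Fintype V] (c i : ℕ) (G : EOBigraph V) : EOBigraph V :=
  (leftSub c)^[i] G

/-- `G^{c-right}_i`: iteratively keep only `c`-right-leaning edges, `i` times. -/
def rightIter {V : Type} [Fintype V] (c i : ℕ) (G : EOBigraph V) : EOBigraph V :=
  (rightSub c)^[i] G

/-- The set of labels of edges incident to `v`. -/
def incidentLabels {V : Type} [Fintype V] (G : EOGraph V) (v : V) : Set ℝ :=
  G.label '' {e | e ∈ G.graph.edgeSet ∧ v ∈ e}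

/-- The vertex label `l(v)`: the second smallest label among the edges incident to `v`
(meaningful when `v` has degree at least 2). -/
noncomputable def secondLabel {V : Type} [Fintype V] (G : EOGraph V) (v : V) : ℝ :=
  sInf (incidentLabels G v \ {sInf (incidentLabels G v)})

/-- `v` has degree at least 2. -/
def DegTwo {V : Type} [Fintype V] (G : EOGraph V) (v : V) : Prop :=
  2 ≤ {e | e ∈ G.graph.edgeSet ∧ v ∈ e}.ncard

/-- An edge `xy` (left end `x`, right end `y`) is left inclined if `l(x) < l(y) ≤ L(xy)`. -/
def LeftInclined {V : Type} [Fintype V] (G : EOBigraph V) (e : Sym2 V) : Prop :=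
  ∃ x y : V, e = s(x, y) ∧ e ∈ G.toEOGraph.graph.edgeSet ∧
    G.side x = false ∧ G.side y = true ∧
    DegTwo G.toEOGraph x ∧ DegTwo G.toEOGraph y ∧
    secondLabel G.toEOGraph x < secondLabel G.toEOGraph y ∧
    secondLabel G.toEOGraph y ≤ G.toEOGraph.label e

/-- An edge `xy` (left end `x`, right end `y`) is right inclined if `l(y) < l(x) ≤ L(xy)`. -/
def RightInclined {V : Type} [Fintype V] (G : EOBigraph V) (e : Sym2 V) : Prop :=
  ∃ x y : V, e = s(x, y) ∧ e ∈ G.toEOGraph.graph.edgeSet ∧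
    G.side x = false ∧ G.side y = true ∧
    DegTwo G.toEOGraph x ∧ DegTwo G.toEOGraph y ∧
    secondLabel G.toEOGraph y < secondLabel G.toEOGraph x ∧
    secondLabel G.toEOGraph x ≤ G.toEOGraph.label e

/-- `G_l`: the spanning sub-bigraph of the left inclined edges of `G`. -/
def inclinedLeftSub {V : Type} [Fintype V] (G : EOBigraph V) : EOBigraph V :=
  bigraphRestrict G (LeftInclined G)

/-- `G_r`: the spanning sub-bigraph of the right inclined edges of `G`. -/
def inclinedRightSub {V : Type} [Fintype V] (G : EOBigraph V) : EOBigraph V :=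
  bigraphRestrict G (RightInclined G)

/-- The underlying simple graph of `P` is a path. -/
def IsPathEO {V : Type} [Fintype V] (P : EOGraph V) : Prop :=
  ∃ (k : ℕ) (f : V ≃ Fin k), ∀ a b, P.graph.Adj a b ↔ (SimpleGraph.pathGraph k).Adj (f a) (f b)

/-- A monotone path: the labels increase (or decrease) monotonically along the path. -/
def IsMonotonePath {V : Type} [Fintype V] (P : EOGraph V) : Prop :=
  ∃ (k : ℕ) (w : Fin k → ℝ) (hw : Function.Injective w),
    (StrictMono w ∨ StrictAnti w) ∧ EOIsoTo (pathEO k w hw) P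

/-- A flipped path: obtained from a monotone path (with at least 3 edges) by swapping
either the two smallest or the two largest labels. -/
def IsFlippedPath {V : Type} [Fintype V] (P : EOGraph V) : Prop :=
  ∃ (k : ℕ) (hk : 4 ≤ k) (w : Fin k → ℝ) (hw : StrictMono w),
    EOIsoTo (pathEO k (w ∘ (Equiv.swap (⟨0, by omega⟩ : Fin k) ⟨1, by omega⟩))
      (hw.injective.comp (Equiv.injective _))) P ∨
    EOIsoTo (pathEO k (w ∘ (Equiv.swap (⟨k-3, by omega⟩ : Fin k) ⟨k-2, by omega⟩))
      (hw.injective.comp (Equiv.injective _))) P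

/-- 0-1 matrix containment: `A` contains `B` if `B` can be obtained from a submatrix of `A`
by possibly changing some 1 entries to 0. -/
def MContains {m n p q : ℕ} (A : Fin m → Fin n → Bool) (B : Fin p → Fin q → Bool) : Prop :=
  ∃ (r : Fin p → Fin m) (c : Fin q → Fin n), StrictMono r ∧ StrictMono c ∧
    ∀ i j, B i j = true → A (r i) (c j) = true

/-- The extremal function of a 0-1 matrix `B`: the maximum number of 1 entries in an
`n × n` 0-1 matrix avoiding `B`. -/
noncomputable def mex {p q : ℕ} (n : ℕ) (B : Fin p → Fin q → Bool) : ℕ :=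
  sSup {k | ∃ A : Fin n → Fin n → Bool, ¬ MContains A B ∧
    k = (Finset.univ.filter fun ij : Fin n × Fin n => A ij.1 ij.2 = true).card}

/-- The staircase with positions `p 0, …, p t` describes the matrix `A`. -/
def DescribedBy {nr nc : ℕ} (A : Fin nr → Fin nc → Bool) (t : ℕ)
    (p : Fin (t + 1) → Fin nr × Fin nc) : Prop :=
  (∀ k : Fin t,
      ((p k.succ).1.val = (p k.castSucc).1.val + 1 ∧ (p k.succ).2 = (p k.castSucc).2) ∨
      ((p k.succ).1 = (p k.castSucc).1 ∧ (p k.succ).2.val = (p k.castSucc).2.val + 1)) ∧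
  ∀ i j, A i j = true ↔
    ((∃ k, p k = (i, j)) ∨
     (i = (p 0).1 ∧ j < (p 0).2) ∨ (j = (p 0).2 ∧ i < (p 0).1) ∨
     (i = (p (Fin.last t)).1 ∧ (p (Fin.last t)).2 < j) ∨
     (j = (p (Fin.last t)).2 ∧ (p (Fin.last t)).1 < i))

/-- A staircase matrix: `A`, or `A` with the order of its columns reversed, is described
by a staircase. -/
def IsStaircaseMatrix {nr nc : ℕ} (A : Fin nr → Fin nc → Bool) : Prop :=
  (∃ t p, DescribedBy A t p) ∨ (∃ t p, DescribedBy (fun i j => A i j.rev) t p)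

/-- The bipartite graph whose bipartite adjacency matrix is `A`. -/
def MatrixGraph {nr nc : ℕ} (A : Fin nr → Fin nc → Bool) : SimpleGraph (Fin nr ⊕ Fin nc) :=
  SimpleGraph.fromRel fun u v =>
    match u, v with
    | .inl i, .inr j => A i j = true
    | _, _ => False

/-- A connected 0-1 matrix: the bipartite adjacency matrix of a connected graph. -/
def IsConnectedMatrix {nr nc : ℕ} (A : Fin nr → Fin nc → Bool) : Prop :=
  (MatrixGraph A).Connected


lemma two_small_edges {V : Type} [Fintype V] (G : EOGraph V) (v : V) (h : DegTwo G v) :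
    ∃ w1 w2 : V, w1 ≠ w2 ∧ s(v,w1) ∈ G.graph.edgeSet ∧ s(v,w2) ∈ G.graph.edgeSet ∧
      G.label s(v,w1) ≤ secondLabel G v ∧ G.label s(v,w2) ≤ secondLabel G v := by
  set T : Set (Sym2 V) := {e | e ∈ G.graph.edgeSet ∧ v ∈ e} with hT
  have hinj : Set.InjOn G.label T := fun e he f hf hef => G.inj e he.1 f hf.1 hef
  set S := incidentLabels G v with hS
  have hSimg : S = G.label '' T := rfl
  have hfin : S.Finite := (Set.toFinite T).image _
  have hcard : 2 ≤ S.ncard := by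
    rw [hSimg, Set.ncard_image_of_injOn hinj]; exact h
  have hne : S.Nonempty := by
    rcases Set.exists_ne_of_one_lt_ncard (show 1 < S.ncard by omega) (0:ℝ) with ⟨b, hb, _⟩
    exact ⟨b, hb⟩
  have hmmem : sInf S ∈ S := hne.csInf_mem hfin
  obtain ⟨b, hb, hbne⟩ := Set.exists_ne_of_one_lt_ncard (show 1 < S.ncard by omega) (sInf S)
  have hne' : (S \ {sInf S}).Nonempty := ⟨b, hb, hbne⟩
  have hsmem : sInf (S \ {sInf S}) ∈ S \ {sInf S} := hne'.csInf_mem hfin.diff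
  have hsec : secondLabel G v = sInf (S \ {sInf S}) := rfl
  have hle : sInf S ≤ sInf (S \ {sInf S}) := csInf_le hfin.bddBelow hsmem.1
  obtain ⟨e1, he1, hl1⟩ := hmmem
  obtain ⟨e2, he2, hl2⟩ := hsmem.1
  obtain ⟨w1, hw1⟩ := Sym2.mem_iff_exists.mp he1.2
  obtain ⟨w2, hw2⟩ := Sym2.mem_iff_exists.mp he2.2
  refine ⟨w1, w2, ?_, hw1 ▸ he1.1, hw2 ▸ he2.1, ?_, ?_⟩
  · intro hww
    apply hsmem.2
    have : e1 = e2 := by rw [hw1, hw2, hww]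
    rw [← hl2, ← this, hl1]
    rfl
  · rw [hsec, ← hw1, hl1]; exact hle
  · rw [hsec, ← hw2, hl2]

/-- If an edge-ordered bigraph `G` avoids `P₆^{-13254}`, then the spanning
subgraph `G_r` of its right inclined edges avoids `P₅^{+2143}`. -/
theorem stmt_16 {V : Type} [Fintype V] (G : EOBigraph V) (h : ¬ BContains G P6minus_13254) :
    ¬ BContains (inclinedRightSub G) P5plus_2143 := by
  intro hc
  apply h
  obtain ⟨f, hfinj, hadj, hord, hside⟩ := hc
  -- path edges of P5
  have hpe : ∀ i j : Fin 5, (i:ℕ) + 1 = (j:ℕ) →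
      s(i, j) ∈ P5plus_2143.toEOGraph.graph.edgeSet := by
    intro i j hij
    show s(i,j) ∈ (SimpleGraph.pathGraph 5).edgeSet
    rw [SimpleGraph.mem_edgeSet]
    rw [SimpleGraph.pathGraph_adj]
    exact Or.inl hij
  have he01 := hpe 0 1 rfl
  have he12 := hpe 1 2 rfl
  have he23 := hpe 2 3 rfl
  have he34 := hpe 3 4 rfl
  -- label values of P5plus_2143
  have hlab : ∀ i j : Fin 5, (i:ℕ) + 1 = (j:ℕ) →
      P5plus_2143.toEOGraph.label s(i,j) = ((![2,1,4,3,0] i : ℕ) : ℝ) := by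
    intro i j hij
    have hmin : min i j = i := min_eq_left (Fin.le_def.mpr (by omega))
    show pathLabel (fun i => ((![2,1,4,3,0] i : ℕ) : ℝ)) s(i,j) = _
    simp [pathLabel, hmin]
  -- label order facts in G
  have hmap : ∀ (i j : Fin 5), Sym2.map f s(i,j) = s(f i, f j) := fun i j => Sym2.map_pair_eq f i j
  have hL21 : G.toEOGraph.label s(f 1, f 2) < G.toEOGraph.label s(f 0, f 1) := by
    have := hord _ he12 _ he01 (by rw [hlab 1 2 rfl, hlab 0 1 rfl]; norm_num)
    rwa [hmap, hmap] at this
  have hL14 : G.toEOGraph.label s(f 0, f 1) < G.toEOGraph.label s(f 3, f 4) := by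
    have := hord _ he01 _ he34 (by rw [hlab 0 1 rfl, hlab 3 4 rfl]; norm_num; decide)
    rwa [hmap, hmap] at this
  have hL43 : G.toEOGraph.label s(f 3, f 4) < G.toEOGraph.label s(f 2, f 3) := by
    have := hord _ he34 _ he23 (by rw [hlab 3 4 rfl, hlab 2 3 rfl]; norm_num; decide)
    rwa [hmap, hmap] at this
  -- adjacency / membership / right-inclinedness of path edges
  have hedge : ∀ i j : Fin 5, (i:ℕ) + 1 = (j:ℕ) →
      s(f i, f j) ∈ G.toEOGraph.graph.edgeSet ∧ RightInclined G s(f i, f j) := by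
    intro i j hij
    have hadj' := hadj i j (by
      show (SimpleGraph.pathGraph 5).Adj i j
      rw [SimpleGraph.pathGraph_adj]; exact Or.inl hij)
    have : (SimpleGraph.fromEdgeSet {e | e ∈ G.toEOGraph.graph.edgeSet ∧ RightInclined G e}).Adj (f i) (f j) := hadj'
    rw [SimpleGraph.fromEdgeSet_adj] at this
    exact this.1
  -- side facts
  have hsideval : ∀ i : Fin 5, G.side (f i) = (if (i:ℕ) % 2 = 0 then true else false) := by
    intro i
    have := hside i
    exact this
  have hs0 : G.side (f 0) = true := hsideval 0
  have hs1 : G.side (f 1) = false := hsideval 1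
  have hs2 : G.side (f 2) = true := hsideval 2
  have hs3 : G.side (f 3) = false := hsideval 3
  have hs4 : G.side (f 4) = true := hsideval 4
  -- unpack right inclined for edge 01
  obtain ⟨x, y, hxy, hmem01, hsx, hsy, hdx, hdy, hlt01, hle01⟩ := (hedge 0 1 rfl).2
  have hxy1 : x = f 1 ∧ y = f 0 := by
    rcases Sym2.eq_iff.mp hxy with ⟨h1, h2⟩ | ⟨h1, h2⟩
    · exfalso; rw [← h1, hs0] at hsx; exact Bool.noConfusion hsx
    · exact ⟨h2.symm, h1.symm⟩
  obtain ⟨hx1, hy1⟩ := hxy1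
  subst hx1; subst hy1
  -- unpack right inclined for edge 12
  obtain ⟨x2, y2, hxy2, hmem12, hsx2, hsy2, hdx2, hdy2, hlt12, hle12⟩ := (hedge 1 2 rfl).2
  have hxy2' : x2 = f 1 ∧ y2 = f 2 := by
    rcases Sym2.eq_iff.mp hxy2 with ⟨h1, h2⟩ | ⟨h1, h2⟩
    · exact ⟨h1.symm, h2.symm⟩
    · exfalso; rw [← h1, hs1] at hsy2; exact Bool.noConfusion hsy2
  obtain ⟨hx2, hy2⟩ := hxy2'
  subst hx2; subst hy2
  -- second label chain: secondLabel (f 0) < secondLabel (f 1) ≤ L2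
  have hchain : secondLabel G.toEOGraph (f 0) < G.toEOGraph.label s(f 1, f 2) :=
    lt_of_lt_of_le hlt01 hle12
  -- two small edges at f 0
  obtain ⟨w1, w2, hww, hew1, hew2, hlw1, hlw2⟩ := two_small_edges G.toEOGraph (f 0) hdy
  -- choose w avoiding f 3
  obtain ⟨w, hwne3, hew, hlw⟩ : ∃ w, w ≠ f 3 ∧ s(f 0, w) ∈ G.toEOGraph.graph.edgeSet ∧
      G.toEOGraph.label s(f 0, w) ≤ secondLabel G.toEOGraph (f 0) := by
    by_cases h1 : w1 = f 3
    · exact ⟨w2, fun hh => hww (h1.trans hh.symm), hew2, hlw2⟩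
    · exact ⟨w1, h1, hew1, hlw1⟩
  have hadjw : G.toEOGraph.graph.Adj (f 0) w := hew
  have hsw : G.side w = false := by
    have := G.proper (f 0) w hadjw
    rw [hs0] at this
    cases hb : G.side w
    · rfl
    · exact absurd hb.symm this
  -- label of new edge is smaller than L2
  have hlwlt : G.toEOGraph.label s(f 0, w) < G.toEOGraph.label s(f 1, f 2) :=
    lt_of_le_of_lt hlw hchain
  -- w distinct from all f i
  have hwne0 : w ≠ f 0 := hadjw.ne'
  have hwne1 : w ≠ f 1 := by
    intro hh
    rw [hh] at hlwlt hlw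
    have : G.toEOGraph.label s(f 0, f 1) < G.toEOGraph.label s(f 0, f 1) :=
      lt_of_lt_of_le (lt_of_le_of_lt hlw hlt01) hle01
    exact lt_irrefl _ this
  have hwne2 : w ≠ f 2 := fun hh => by rw [hh, hs2] at hsw; exact Bool.noConfusion hsw
  have hwne4 : w ≠ f 4 := fun hh => by rw [hh, hs4] at hsw; exact Bool.noConfusion hsw
  -- the embedding
  set g : Fin 6 → V := ![w, f 0, f 1, f 2, f 3, f 4] with hg
  have hfne : ∀ i j : Fin 5, i ≠ j → f i ≠ f j := fun i j hij hh => hij (hfinj hh)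
  refine ⟨g, ?_, ?_, ?_, ?_⟩
  · -- injective
    intro a b hab
    fin_cases a <;> fin_cases b <;>
      simp_all [hg] <;>
      first
        | rfl
        | (exact absurd hab (hfne _ _ (by decide)))
        | (exact absurd hab.symm (hfne _ _ (by decide)))
        | (exact absurd hab hwne0) | (exact absurd hab.symm hwne0)
        | (exact absurd hab hwne1) | (exact absurd hab.symm hwne1)
        | (exact absurd hab hwne2) | (exact absurd hab.symm hwne2)
        | (exact absurd hab hwne3) | (exact absurd hab.symm hwne3)
        | (exact absurd hab hwne4) | (exact absurd hab.symm hwne4)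
  · -- adjacency
    intro a b hab
    have hab' : (a:ℕ) + 1 = (b:ℕ) ∨ (b:ℕ) + 1 = (a:ℕ) := SimpleGraph.pathGraph_adj.mp hab
    have hAdj : ∀ i j : Fin 5, (i:ℕ)+1 = (j:ℕ) → G.toEOGraph.graph.Adj (f i) (f j) := by
      intro i j hij
      exact (SimpleGraph.mem_edgeSet _).mp (hedge i j hij).1
    fin_cases a <;> fin_cases b <;> simp_all [hg] <;>
      first
        | (exact hadjw.symm) | (exact hadjw)
        | (exact hAdj 0 1 rfl) | (exact (hAdj 0 1 rfl).symm)
        | (exact hAdj 1 2 rfl) | (exact (hAdj 1 2 rfl).symm)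
        | (exact hAdj 2 3 rfl) | (exact (hAdj 2 3 rfl).symm)
        | (exact hAdj 3 4 rfl) | (exact (hAdj 3 4 rfl).symm)
  · -- order
    intro e he e' he' hee
    obtain ⟨i, j, rfl, hij⟩ := pathGraph_edge_form he
    obtain ⟨i', j', rfl, hij'⟩ := pathGraph_edge_form he'
    have hi5 : (i:ℕ) < 5 := by omega
    have hi5' : (i':ℕ) < 5 := by omega
    have hj : j = ⟨(i:ℕ)+1, Nat.succ_lt_succ hi5⟩ := Fin.ext (by simp [← hij])
    have hj' : j' = ⟨(i':ℕ)+1, Nat.succ_lt_succ hi5'⟩ := Fin.ext (by simp [← hij'])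
    subst hj hj'
    have hlab6 : ∀ i : Fin 6, (hi : (i:ℕ) < 5) →
        P6minus_13254.toEOGraph.label s(i, ⟨(i:ℕ)+1, by omega⟩) = ((![1,3,2,5,4,0] i : ℕ) : ℝ) := by
      intro i hi
      have hmin : min i (⟨(i:ℕ)+1, by omega⟩ : Fin 6) = i := min_eq_left (Fin.le_def.mpr (by simp))
      show pathLabel (fun i => ((![1,3,2,5,4,0] i : ℕ) : ℝ)) s(i, _) = _
      simp [pathLabel, hmin]
    rw [hlab6 i hi5, hlab6 i' hi5'] at hee
    rw [Sym2.map_pair_eq, Sym2.map_pair_eq]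
    have hL0 := hlwlt
    have swap0 : G.toEOGraph.label s(w, f 0) = G.toEOGraph.label s(f 0, w) := by rw [Sym2.eq_swap]
    fin_cases i <;> fin_cases i' <;>
      simp only [hg] at hee ⊢ <;> norm_num at hee <;> norm_num <;>
      linarith [hL0, hL21, hL14, hL43, swap0]
  · -- sides
    intro a
    show G.side (g a) = _
    fin_cases a
    · exact hsw
    · exact hs0
    · exact hs1
    · exact hs2
    · exact hs3
    · exact hs4
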